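/- Let K ≥ 2, 0 < p_1 < ⋯ < p_{K+1} ≤ 1, α₀ > 1, and let W be a symmetric positive definite (K−1)×(K−1) real matrix. Define G(α) = (r(α) − r(α₀))ᵀ W (r(α) − r(α₀)) for α > 1. Then G(α₀) = 0 and G(α) > 0 for every α ∈ (1,∞) with α ≠ α₀; in particular, α₀ is the unique minimizer of G on (1,∞). -/

import Mathlib

open Real

/-- The vector `r(α) ∈ ℝ^{K−1}` with
`r_k(α) = (p_{k+1}^(1−ξ) − p_k^(1−ξ))/(p_{K+1}^(1−ξ) − p_K^(1−ξ))`, `ξ = 1/α`. -/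
noncomputable def rFun (K : ℕ) (p : ℕ → ℝ) (α : ℝ) : Fin (K - 1) → ℝ :=
  fun k =>
    (p ((k : ℕ) + 2) ^ (1 - 1 / α) - p ((k : ℕ) + 1) ^ (1 - 1 / α)) /
      (p (K + 1) ^ (1 - 1 / α) - p K ^ (1 - 1 / α))


lemma conv3 (u v w : ℝ) (h1 : u < v) (h2 : v < w) :
    (w - u) * Real.exp v < (w - v) * Real.exp u + (v - u) * Real.exp w := by
  have hwu : 0 < w - u := by linarith
  have ht : (0:ℝ) < (w - v) / (w - u) := div_pos (by linarith) hwu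
  have hr : (0:ℝ) < (v - u) / (w - u) := div_pos (by linarith) hwu
  have hsum : (w - v) / (w - u) + (v - u) / (w - u) = 1 := by field_simp; ring
  have hne : u ≠ w := by linarith
  have h := strictConvexOn_exp.2 (Set.mem_univ u) (Set.mem_univ w) hne ht hr hsum
  have hv : ((w - v) / (w - u)) • u + ((v - u) / (w - u)) • w = v := by
    simp only [smul_eq_mul]
    rw [div_mul_eq_mul_div, div_mul_eq_mul_div, ← add_div, div_eq_iff hwu.ne']
    ring
  rw [hv] at h
  simp only [smul_eq_mul] at h
  have h' := mul_lt_mul_of_pos_left h hwu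
  calc (w - u) * Real.exp v
      < (w - u) * ((w - v) / (w - u) * Real.exp u + (v - u) / (w - u) * Real.exp w) := h'
    _ = (w - v) * Real.exp u + (v - u) * Real.exp w := by field_simp

lemma key (s x y z : ℝ) (hs : 0 < s) (h1 : x < y) (h2 : y < z) :
    Real.exp (y*s) * Real.exp (z*s) * (y - z) + Real.exp (x*s) * Real.exp (z*s) * (z - x)
      + Real.exp (x*s) * Real.exp (y*s) * (x - y) < 0 := by
  have h := conv3 (-(z*s)) (-(y*s)) (-(x*s)) (by nlinarith) (by nlinarith)
  have hP : (0:ℝ) < Real.exp (x*s) * Real.exp (y*s) * Real.exp (z*s) := by positivity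
  have h2' := mul_lt_mul_of_pos_right h hP
  have e1 : Real.exp (-(y*s)) * (Real.exp (x*s) * Real.exp (y*s) * Real.exp (z*s))
      = Real.exp (x*s) * Real.exp (z*s) := by
    simp only [← Real.exp_add]; congr 1; ring
  have e2 : Real.exp (-(z*s)) * (Real.exp (x*s) * Real.exp (y*s) * Real.exp (z*s))
      = Real.exp (x*s) * Real.exp (y*s) := by
    simp only [← Real.exp_add]; congr 1; ring
  have e3 : Real.exp (-(x*s)) * (Real.exp (x*s) * Real.exp (y*s) * Real.exp (z*s))
      = Real.exp (y*s) * Real.exp (z*s) := by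
    simp only [← Real.exp_add]; congr 1; ring
  have l1 : (-(x*s) - -(z*s)) * Real.exp (-(y*s))
        * (Real.exp (x*s) * Real.exp (y*s) * Real.exp (z*s))
      = s*(z-x) * (Real.exp (x*s) * Real.exp (z*s)) := by
    rw [mul_assoc, e1]; ring
  have l2 : ((-(x*s) - -(y*s)) * Real.exp (-(z*s)) + (-(y*s) - -(z*s)) * Real.exp (-(x*s)))
        * (Real.exp (x*s) * Real.exp (y*s) * Real.exp (z*s))
      = s*(y-x) * (Real.exp (x*s) * Real.exp (y*s))
        + s*(z-y) * (Real.exp (y*s) * Real.exp (z*s)) := by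
    linear_combination (-(x*s) - -(y*s)) * e2 + (-(y*s) - -(z*s)) * e3
  rw [l1, l2] at h2'
  by_contra hcon
  push_neg at hcon
  nlinarith [mul_nonneg hs.le hcon]

lemma phi_anti {a b c : ℝ} (ha : 0 < a) (hab : a < b) (hbc : b < c) :
    StrictAntiOn (fun s : ℝ => (b ^ s - a ^ s) / (c ^ s - b ^ s)) (Set.Ioi (0:ℝ)) := by
  have hb : 0 < b := ha.trans hab
  have hc : 0 < c := hb.trans hbc
  have hN : ∀ s : ℝ, HasDerivAt (fun s : ℝ => b ^ s - a ^ s)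
      (b ^ s * Real.log b - a ^ s * Real.log a) s := fun s =>
    ((Real.hasStrictDerivAt_const_rpow hb s).hasDerivAt.sub
      (Real.hasStrictDerivAt_const_rpow ha s).hasDerivAt)
  have hD : ∀ s : ℝ, HasDerivAt (fun s : ℝ => c ^ s - b ^ s)
      (c ^ s * Real.log c - b ^ s * Real.log b) s := fun s =>
    ((Real.hasStrictDerivAt_const_rpow hc s).hasDerivAt.sub
      (Real.hasStrictDerivAt_const_rpow hb s).hasDerivAt)
  have hDpos : ∀ s : ℝ, 0 < s → 0 < c ^ s - b ^ s := by
    intro s hs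
    have := Real.rpow_lt_rpow hb.le hbc hs
    linarith
  apply strictAntiOn_of_deriv_neg (convex_Ioi 0)
  · apply ContinuousOn.div
    · exact fun s _ => (hN s).continuousAt.continuousWithinAt
    · exact fun s _ => (hD s).continuousAt.continuousWithinAt
    · intro s hs; exact (hDpos s hs).ne'
  · intro s hs
    rw [interior_Ioi] at hs
    have hs' : 0 < s := hs
    have hder := ((hN s).div (hD s) (hDpos s hs').ne')
    rw [show (fun s : ℝ => (b ^ s - a ^ s) / (c ^ s - b ^ s)) = (fun s : ℝ => b ^ s - a ^ s) / (fun s : ℝ => c ^ s - b ^ s) from rfl, hder.deriv]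
    apply div_neg_of_neg_of_pos
    · have hk := key s (Real.log a) (Real.log b) (Real.log c) hs'
        (Real.log_lt_log ha hab) (Real.log_lt_log hb hbc)
      rw [← Real.rpow_def_of_pos ha, ← Real.rpow_def_of_pos hb, ← Real.rpow_def_of_pos hc] at hk
      nlinarith [hk]
    · exact pow_pos (hDpos s hs') 2


/-- For a symmetric positive definite weighting matrix `W`, the population
objective `G(α) = (r(α) − r(α₀))ᵀ W (r(α) − r(α₀))` satisfies `G(α₀) = 0` and `G(α) > 0` for
all `α ∈ (1,∞)`, `α ≠ α₀`; in particular `α₀` is the unique minimizer of `G` on `(1,∞)`. -/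
theorem stmt11 (K : ℕ) (hK : 2 ≤ K)
    (p : ℕ → ℝ) (hp0 : 0 < p 1) (hpmono : ∀ k, 1 ≤ k → k ≤ K → p k < p (k + 1))
    (hp1 : p (K + 1) ≤ 1) (α₀ : ℝ) (hα₀ : 1 < α₀)
    (W : Matrix (Fin (K - 1)) (Fin (K - 1)) ℝ) (hWsymm : W.IsSymm)
    (hWpd : ∀ z : Fin (K - 1) → ℝ, z ≠ 0 → 0 < ∑ i, ∑ j, z i * W i j * z j)
    (G : ℝ → ℝ)
    (hG : ∀ α, G α = ∑ i, ∑ j,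
      (rFun K p α i - rFun K p α₀ i) * W i j * (rFun K p α j - rFun K p α₀ j)) :
    G α₀ = 0 ∧ ∀ α : ℝ, 1 < α → α ≠ α₀ → 0 < G α := by
  have hpos : ∀ j, 1 ≤ j → j ≤ K + 1 → 0 < p j := by
    intro j
    induction j with
    | zero => omega
    | succ n ih =>
      intro _ h2
      by_cases hn : n = 0
      · subst hn; exact hp0
      · have hn1 : 1 ≤ n := by omega
        have h3 := hpmono n hn1 (by omega)
        have h4 := ih hn1 (by omega)
        linarith
  have ha : 0 < p (K - 1) := hpos (K - 1) (by omega) (by omega)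
  have hab : p (K - 1) < p K := by
    have h := hpmono (K - 1) (by omega) (by omega)
    have e : K - 1 + 1 = K := by omega
    rwa [e] at h
  have hbc : p K < p (K + 1) := hpmono K (by omega) le_rfl
  have hAnti := phi_anti ha hab hbc
  set i₀ : Fin (K - 1) := ⟨K - 2, by omega⟩ with hi₀
  have hival : ∀ α : ℝ, rFun K p α i₀
      = (p K ^ (1 - 1/α) - p (K - 1) ^ (1 - 1/α)) /
        (p (K + 1) ^ (1 - 1/α) - p K ^ (1 - 1/α)) := by
    intro α
    have e2 : (i₀ : ℕ) + 2 = K := by simp [hi₀]; omega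
    have e1 : (i₀ : ℕ) + 1 = K - 1 := by simp [hi₀]; omega
    simp only [rFun, e1, e2]
  have hsmem : ∀ α : ℝ, 1 < α → (1 - 1/α) ∈ Set.Ioi (0:ℝ) := by
    intro α hα
    have h1 : 1/α < 1 := by
      rw [div_lt_one (by linarith)]; exact hα
    simp only [Set.mem_Ioi]; linarith
  constructor
  · rw [hG]; simp
  · intro α hα hne
    have hz : (fun i => rFun K p α i - rFun K p α₀ i) ≠ 0 := by
      intro h0
      have h1 := congrFun h0 i₀
      simp only [Pi.zero_apply, sub_eq_zero] at h1
      rw [hival α, hival α₀] at h1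
      have heq := hAnti.injOn (hsmem α hα) (hsmem α₀ hα₀) h1
      have hinv : 1/α = 1/α₀ := by linarith
      apply hne
      field_simp at hinv
      linarith
    have h := hWpd _ hz
    rw [hG]
    simpa using h
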